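/- Let γ : ℝ → 𝕋 = ℝ/ℤ be a periodic C¹ curve with lift γ̄ : ℝ → ℝ such that there do not exist times t₁ < t₂ with γ(t₁) = γ(t₂) and γ̇(t₁) ≠ γ̇(t₂) (graph property: the velocity is a function of position). Then γ̄ is monotone. -/

import Mathlib

open Set

/-- A continuous integer-valued function on `ℝ` is constant. -/
private lemma int_valued_const {d : ℝ → ℝ} (hc : Continuous d)
    (hi : ∀ t, ∃ n : ℤ, d t = n) : ∀ s t, d s = d t := by
  have main : ∀ s t : ℝ, s ≤ t → d s = d t := by
    intro s t hst
    by_contra hne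
    obtain ⟨m, hm⟩ := hi s
    obtain ⟨n, hn⟩ := hi t
    have key : ∀ (p q : ℤ), d s = p → d t = q → ¬ d s < d t := by
      intro p q hp hq hlt
      have hpq : p < q := by
        have := hlt
        rw [hp, hq] at this
        exact_mod_cast this
      have hy : (p : ℝ) + 1/2 ∈ Ioo (d s) (d t) := by
        constructor
        · rw [hp]; linarith
        · rw [hq]
          have : (p : ℝ) + 1 ≤ q := by exact_mod_cast hpq
          linarith
      obtain ⟨u, _, hu⟩ := intermediate_value_Ioo hst hc.continuousOn hy
      obtain ⟨r, hr⟩ := hi u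
      rw [hr] at hu
      have h2 : (2 * r : ℝ) = 2 * p + 1 := by linarith
      have h3 : (2 * r : ℤ) = 2 * p + 1 := by exact_mod_cast h2
      omega
    rcases lt_or_gt_of_ne hne with h | h
    · exact key m n hm hn h
    · -- d t < d s, use intermediate_value_Ioo'
      have hy : (n : ℝ) + 1/2 ∈ Ioo (d t) (d s) := by
        have hpq : n < m := by
          have := h; rw [hm, hn] at this; exact_mod_cast this
        constructor
        · rw [hn]; linarith
        · rw [hm]
          have : (n : ℝ) + 1 ≤ m := by exact_mod_cast hpq
          linarith
      obtain ⟨u, _, hu⟩ := intermediate_value_Ioo' hst hc.continuousOn hy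
      obtain ⟨r, hr⟩ := hi u
      rw [hr] at hu
      have h2 : (2 * r : ℝ) = 2 * n + 1 := by linarith
      have h3 : (2 * r : ℤ) = 2 * n + 1 := by exact_mod_cast h2
      omega
  intro s t
  rcases le_total s t with h | h
  · exact main s t h
  · exact (main t s h).symm

/-- Key contradiction lemma: if the derivative takes a negative value somewhere and a positive
value somewhere, the derivative only depends on the value of `γbar`, `γbar` shifts by a
nonnegative constant `k` over each period, then we get a contradiction. -/
private lemma key_lemma (γbar f : ℝ → ℝ) (τ k : ℝ) (hτ : 0 < τ)
    (hfc : Continuous f)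
    (hderiv : ∀ t, HasDerivAt γbar (f t) t)
    (hgraph : ∀ t₁ t₂ : ℝ, γbar t₁ = γbar t₂ → f t₁ = f t₂)
    (hfper : ∀ t, f (t + τ) = f t)
    (hper : ∀ t, γbar (t + τ) = γbar t + k)
    (hk : 0 ≤ k)
    (a b : ℝ) (ha : 0 < f a) (hb : f b < 0) : False := by
  have hcont : Continuous γbar := by
    have : Differentiable ℝ γbar := fun t => (hderiv t).differentiableAt
    exact this.continuous
  -- iterated periodicity
  have hγpern : ∀ (n : ℕ) (t : ℝ), γbar (t + n * τ) = γbar t + n * k := by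
    intro n
    induction n with
    | zero => simp
    | succ m ih =>
      intro t
      have : t + (m + 1 : ℕ) * τ = (t + m * τ) + τ := by push_cast; ring
      rw [this, hper, ih]
      push_cast; ring
  have hfpern : ∀ (n : ℕ) (t : ℝ), f (t + n * τ) = f t := by
    intro n
    induction n with
    | zero => simp
    | succ m ih =>
      intro t
      have : t + (m + 1 : ℕ) * τ = (t + m * τ) + τ := by push_cast; ring
      rw [this, hfper, ih]
  -- find a zero of f
  have hzero : ∃ z, f z = 0 := by
    rcases le_total a b with h | h
    · obtain ⟨z, _, hz⟩ := intermediate_value_Icc' h hfc.continuousOn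
        (show (0:ℝ) ∈ Icc (f b) (f a) from ⟨hb.le, ha.le⟩)
      exact ⟨z, hz⟩
    · obtain ⟨z, _, hz⟩ := intermediate_value_Icc h hfc.continuousOn
        (show (0:ℝ) ∈ Icc (f b) (f a) from ⟨hb.le, ha.le⟩)
      exact ⟨z, hz⟩
  obtain ⟨z, hz⟩ := hzero
  -- the set of zeros of f at or after b
  set S : Set ℝ := Ici b ∩ f ⁻¹' {0} with hS
  have hSne : S.Nonempty := by
    obtain ⟨n, hn⟩ := Archimedean.arch (b - z) hτ
    refine ⟨z + n * τ, ?_, ?_⟩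
    · have : (n : ℝ) * τ = n • τ := by simp [nsmul_eq_mul]
      simp only [mem_Ici]
      rw [this]
      linarith [hn]
    · simp [hfpern n z, hz]
  have hSclosed : IsClosed S := isClosed_Ici.inter (isClosed_singleton.preimage hfc)
  have hSbdd : BddBelow S := ⟨b, fun x hx => hx.1⟩
  set c := sInf S with hc
  have hcS : c ∈ S := hSclosed.csInf_mem hSne hSbdd
  have hfc0 : f c = 0 := hcS.2
  have hbc : b < c := by
    rcases lt_or_eq_of_le (mem_Ici.mp hcS.1) with h | h
    · exact h
    · exfalso; rw [← h] at hfc0; linarith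
  -- f is negative on [b, c)
  have hneg_on : ∀ t ∈ Ico b c, f t < 0 := by
    intro t ht
    rcases lt_trichotomy (f t) 0 with h | h | h
    · exact h
    · exfalso
      have : t ∈ S := ⟨ht.1, by simp [h]⟩
      exact absurd (csInf_le hSbdd this) (not_le.mpr ht.2)
    · exfalso
      obtain ⟨z', hz'mem, hz'⟩ := intermediate_value_Icc ht.1 hfc.continuousOn
        (show (0:ℝ) ∈ Icc (f b) (f t) from ⟨hb.le, h.le⟩)
      have : z' ∈ S := ⟨hz'mem.1, by simp [hz']⟩
      have := csInf_le hSbdd this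
      have := ht.2
      have := hz'mem.2
      linarith
  -- γbar is strictly decreasing on [b, c]
  have hanti : StrictAntiOn γbar (Icc b c) := by
    apply strictAntiOn_of_deriv_neg (convex_Icc b c) hcont.continuousOn
    intro x hx
    rw [interior_Icc] at hx
    rw [(hderiv x).deriv]
    exact hneg_on x ⟨hx.1.le, hx.2⟩
  set v := γbar c with hv
  set B := γbar b with hB
  have hvB : v < B := hanti ⟨le_rfl, hbc.le⟩ ⟨hbc.le, le_rfl⟩ hbc
  -- find e > c with γbar e ≥ B > v
  obtain ⟨n, hn⟩ := Archimedean.arch (c - b) hτ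
  set e := b + (n + 1) * τ with he
  have hce : c < e := by
    have h1 : (n : ℝ) * τ = n • τ := by simp [nsmul_eq_mul]
    have : c - b ≤ n * τ := by rw [h1]; exact_mod_cast hn
    have : (n : ℝ) * τ < (n + 1) * τ := by nlinarith
    simp only [he]
    linarith
  have hγe : v < γbar e := by
    have := hγpern (n + 1) b
    push_cast at this
    rw [he, this]
    have : 0 ≤ ((n : ℝ) + 1) * k := by positivity
    linarith
  -- the last time in [c, e] where γbar equals v
  set T : Set ℝ := Icc c e ∩ γbar ⁻¹' {v} with hT
  have hTne : T.Nonempty := ⟨c, ⟨le_rfl, hce.le⟩, by simp [hv]⟩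
  have hTclosed : IsClosed T := isClosed_Icc.inter (isClosed_singleton.preimage hcont)
  have hTbdd : BddAbove T := ⟨e, fun x hx => hx.1.2⟩
  set s₀ := sSup T with hs₀
  have hs₀T : s₀ ∈ T := hTclosed.csSup_mem hTne hTbdd
  have hγs₀ : γbar s₀ = v := hs₀T.2
  have hcs₀ : c ≤ s₀ := hs₀T.1.1
  have hs₀e : s₀ < e := by
    rcases lt_or_eq_of_le hs₀T.1.2 with h | h
    · exact h
    · exfalso; rw [h] at hγs₀; linarith
  -- γbar > v on (s₀, e]
  have habove : ∀ t ∈ Ioc s₀ e, v < γbar t := by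
    intro t ht
    rcases lt_trichotomy (γbar t) v with h | h | h
    · exfalso
      obtain ⟨u, humem, hu⟩ := intermediate_value_Ioo ht.2 hcont.continuousOn
        (show v ∈ Ioo (γbar t) (γbar e) from ⟨h, hγe⟩)
      have huT : u ∈ T := ⟨⟨le_trans hcs₀ (le_trans ht.1.le humem.1.le), humem.2.le⟩, by simp [hu]⟩
      have := le_csSup hTbdd huT
      have := ht.1
      have := humem.1
      linarith
    · exfalso
      have : t ∈ T := ⟨⟨le_trans hcs₀ ht.1.le, ht.2⟩, by simp [h]⟩
      exact absurd (le_csSup hTbdd this) (not_le.mpr ht.1)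
    · exact h
  -- pick s₁ close to s₀ with γbar < B on [s₀, s₁]
  have hopen : IsOpen {t : ℝ | γbar t < B} := isOpen_lt hcont continuous_const
  have hs₀mem : s₀ ∈ {t : ℝ | γbar t < B} := by simp only [mem_setOf_eq]; rw [hγs₀]; exact hvB
  obtain ⟨δ, hδpos, hball⟩ := Metric.isOpen_iff.mp hopen s₀ hs₀mem
  set s₁ := min e (s₀ + δ/2) with hs₁def
  have hs₀s₁ : s₀ < s₁ := lt_min hs₀e (by linarith)
  have hs₁e : s₁ ≤ e := min_le_left _ _
  have hltB : ∀ t ∈ Icc s₀ s₁, γbar t < B := by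
    intro t ht
    apply hball
    rw [Metric.mem_ball, Real.dist_eq, abs_of_nonneg (by linarith [ht.1])]
    have : t ≤ s₀ + δ/2 := le_trans ht.2 (min_le_right _ _)
    linarith
  -- f < 0 on (s₀, s₁]
  have hfneg : ∀ t ∈ Ioc s₀ s₁, f t < 0 := by
    intro t ht
    have h1 : v < γbar t := habove t ⟨ht.1, le_trans ht.2 hs₁e⟩
    have h2 : γbar t < B := hltB t ⟨ht.1.le, ht.2⟩
    obtain ⟨t', ht'mem, ht'⟩ := intermediate_value_Ioo' hbc.le hcont.continuousOn
      (show γbar t ∈ Ioo (γbar c) (γbar b) from ⟨h1, h2⟩)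
    have := hneg_on t' ⟨ht'mem.1.le, ht'mem.2⟩
    have := hgraph t t' ht'.symm
    linarith
  -- hence γbar is antitone on [s₀, s₁]
  have hfs₀ : f s₀ = 0 := by
    have := hgraph s₀ c (by rw [hγs₀])
    rw [this, hfc0]
  have hantiOn : AntitoneOn γbar (Icc s₀ s₁) := by
    apply antitoneOn_of_deriv_nonpos (convex_Icc s₀ s₁) hcont.continuousOn
    · intro x _
      exact (hderiv x).differentiableAt.differentiableWithinAt
    · intro x hx
      rw [interior_Icc] at hx
      rw [(hderiv x).deriv]
      exact (hfneg x ⟨hx.1, hx.2.le⟩).le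
  have h1 : γbar s₁ ≤ γbar s₀ :=
    hantiOn ⟨le_rfl, hs₀s₁.le⟩ ⟨hs₀s₁.le, le_rfl⟩ hs₀s₁.le
  have h2 : v < γbar s₁ := habove s₁ ⟨hs₀s₁, hs₁e⟩
  rw [hγs₀] at h1
  linarith

/-- a periodic `C¹` curve `γ : ℝ → 𝕋 = ℝ/ℤ` with the graph property (velocity is
a function of position) has a monotone lift `γ̄`. -/
theorem stmt11 (γ : ℝ → AddCircle (1:ℝ)) (γbar : ℝ → ℝ)
    (hlift : ∀ t, γ t = (γbar t : AddCircle (1:ℝ)))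
    (hC1 : ContDiff ℝ 1 γbar)
    (τ : ℝ) (hτ : 0 < τ) (hper : ∀ t, γ (t + τ) = γ t)
    (hgraph : ∀ t₁ t₂ : ℝ, γ t₁ = γ t₂ → deriv γbar t₁ = deriv γbar t₂) :
    Monotone γbar ∨ Antitone γbar := by
  set f := deriv γbar with hf
  have hfc : Continuous f := hC1.continuous_deriv le_rfl
  have hdiff : Differentiable ℝ γbar := hC1.differentiable one_ne_zero
  have hcont : Continuous γbar := hdiff.continuous
  have hderiv : ∀ t, HasDerivAt γbar (f t) t := fun t => (hdiff t).hasDerivAt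
  -- graph property in terms of γbar values
  have hgraph' : ∀ t₁ t₂ : ℝ, γbar t₁ = γbar t₂ → f t₁ = f t₂ := by
    intro t₁ t₂ h
    exact hgraph t₁ t₂ (by rw [hlift, hlift, h])
  -- f is τ-periodic
  have hfper : ∀ t, f (t + τ) = f t := fun t => hgraph _ _ (hper t)
  -- γbar shifts by a constant integer k over each period
  set d : ℝ → ℝ := fun t => γbar (t + τ) - γbar t with hd
  have hdc : Continuous d := (hcont.comp (continuous_id.add continuous_const)).sub hcont
  have hdi : ∀ t, ∃ n : ℤ, d t = n := by
    intro t
    have h : (γbar (t + τ) : AddCircle (1:ℝ)) = γbar t := by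
      rw [← hlift, ← hlift]; exact hper t
    rw [QuotientAddGroup.eq_iff_sub_mem, AddSubgroup.mem_zmultiples_iff] at h
    obtain ⟨n, hn⟩ := h
    exact ⟨n, by simpa [hd] using hn.symm⟩
  have hdconst : ∀ s t, d s = d t := int_valued_const hdc hdi
  set k := γbar τ - γbar 0 with hk
  have hper' : ∀ t, γbar (t + τ) = γbar t + k := by
    intro t
    have := hdconst t 0
    simp only [hd] at this
    rw [zero_add] at this
    rw [hk]; linarith
  by_cases hpos : ∀ t, 0 ≤ f t
  · exact Or.inl (monotone_of_deriv_nonneg hdiff hpos)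
  by_cases hneg : ∀ t, f t ≤ 0
  · exact Or.inr (antitone_of_deriv_nonpos hdiff hneg)
  exfalso
  push_neg at hpos hneg
  obtain ⟨b, hb⟩ := hpos
  obtain ⟨a, ha⟩ := hneg
  rcases le_total 0 k with hk0 | hk0
  · exact key_lemma γbar f τ k hτ hfc hderiv hgraph' hfper hper' hk0 a b ha hb
  · -- apply to the negated curve
    refine key_lemma (fun t => -γbar t) (fun t => -f t) τ (-k) hτ hfc.neg
      (fun t => (hderiv t).neg) ?_ (fun t => by simp [hfper t]) ?_ (by linarith)
      b a (show (0:ℝ) < -f b by linarith) (show -f a < (0:ℝ) by linarith)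
    · intro t₁ t₂ h
      have : γbar t₁ = γbar t₂ := by linarith [neg_inj.mp h]
      simp [hgraph' t₁ t₂ this]
    · intro t
      have := hper' t
      show -γbar (t + τ) = -γbar t + -k
      linarith
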